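/- arXiv:2203.16476 — 3 statements merged into one kernel-verified Lean document; each statement's English description precedes it below -/
import Mathlib

section
/- Let A ∈ {0,1}^{D×N} be the incidence matrix of a path system (U, Π) where each path in Π is the unique shortest path between its endpoints in some weighted graph H on vertex set U. Then A has VC dimension at most 2, i.e., no 3 columns of A are shattered by the rows: for any three vertices u, v, w ∈ U there do not exist 8 paths in Π realizing all 8 possible intersection patterns with {u, v, w}. -/
open SimpleGraph

noncomputable def walkWeight {V : Type*} {G : SimpleGraph V} (w : Sym2 V → ℝ)
    {u v : V} (p : G.Walk u v) : ℝ :=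
  (p.edges.map w).sum

section Helpers

variable {V : Type*} {G : SimpleGraph V} [DecidableEq V]

lemma walkWeight_append (w : Sym2 V → ℝ) {a b c : V} (p : G.Walk a b) (q : G.Walk b c) :
    walkWeight w (p.append q) = walkWeight w p + walkWeight w q := by
  simp [walkWeight, Walk.edges_append]

lemma walkWeight_reverse (w : Sym2 V → ℝ) {a b : V} (p : G.Walk a b) :
    walkWeight w p.reverse = walkWeight w p := by
  simp [walkWeight, Walk.edges_reverse, List.sum_reverse]

lemma walk_append_left_cancel {a b c : V} (p : G.Walk a b) {q r : G.Walk b c}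
    (h : p.append q = p.append r) : q = r := by
  induction p with
  | nil => simpa using h
  | cons h' p ih =>
    rw [Walk.cons_append, Walk.cons_append] at h
    exact ih (by simpa using h)

lemma walk_append_right_cancel {a b c : V} {q r : G.Walk a b} (p : G.Walk b c)
    (h : q.append p = r.append p) : q = r := by
  have h2 := congrArg Walk.reverse h
  rw [Walk.reverse_append, Walk.reverse_append] at h2
  have h3 := walk_append_left_cancel _ h2
  simpa using congrArg Walk.reverse h3

/-- Strict minimality of a walk among all walks with the same endpoints. -/
def WalkStrictMin (w : Sym2 V → ℝ) {a b : V} (p : G.Walk a b) : Prop :=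
  ∀ q : G.Walk a b, q ≠ p → walkWeight w p < walkWeight w q

lemma WalkStrictMin.segment {w : Sym2 V → ℝ} {s a c t : V} {p : G.Walk s t}
    (hp : WalkStrictMin w p) (p1 : G.Walk s a) (m : G.Walk a c) (p3 : G.Walk c t)
    (hdec : p = p1.append (m.append p3)) : WalkStrictMin w m := by
  intro q hq
  have hne : p1.append (q.append p3) ≠ p := by
    intro h
    rw [hdec] at h
    exact hq (walk_append_right_cancel p3 (walk_append_left_cancel p1 h))
  have h := hp _ hne
  rw [hdec, walkWeight_append, walkWeight_append, walkWeight_append, walkWeight_append] at h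
  linarith

lemma WalkStrictMin.reverse {w : Sym2 V → ℝ} {a b : V} {p : G.Walk a b}
    (hp : WalkStrictMin w p) : WalkStrictMin w p.reverse := by
  intro q hq
  have hne : q.reverse ≠ p := fun h => hq (by rw [← h, Walk.reverse_reverse])
  have h := hp _ hne
  rw [walkWeight_reverse, ← walkWeight_reverse w q]
  exact h

lemma WalkStrictMin.unique {w : Sym2 V → ℝ} {a b : V} {p q : G.Walk a b}
    (hp : WalkStrictMin w p) (hq : WalkStrictMin w q) : p = q := by
  by_contra h
  have h1 := hp q (Ne.symm h)
  have h2 := hq p h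
  linarith

/-- The initial segment of a walk up to the later of two vertices contains the earlier one. -/
lemma walk_two_point {s t : V} (p : G.Walk s t) {v x : V} (hv : v ∈ p.support)
    (hx : x ∈ p.support) (hvx : v ≠ x) :
    ∃ b c, ((b = v ∧ c = x) ∨ (b = x ∧ c = v)) ∧
      ∃ (m : G.Walk s c) (p3 : G.Walk c t), p = m.append p3 ∧ b ∈ m.support := by
  induction p with
  | nil =>
    simp only [Walk.support_nil, List.mem_singleton] at hv hx
    exact absurd (hv.trans hx.symm) hvx
  | @cons a a' t h p ih =>
    by_cases hav : a = v
    · subst hav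
      exact ⟨a, x, Or.inl ⟨rfl, rfl⟩, (Walk.cons h p).takeUntil x hx,
        (Walk.cons h p).dropUntil x hx, ((Walk.cons h p).take_spec hx).symm,
        Walk.start_mem_support _⟩
    by_cases hax : a = x
    · subst hax
      exact ⟨a, v, Or.inr ⟨rfl, rfl⟩, (Walk.cons h p).takeUntil v hv,
        (Walk.cons h p).dropUntil v hv, ((Walk.cons h p).take_spec hv).symm,
        Walk.start_mem_support _⟩
    · have hv' : v ∈ p.support := by
        rcases (Walk.mem_support_iff _).1 hv with h' | h'
        · exact absurd h'.symm hav
        · simpa using h'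
      have hx' : x ∈ p.support := by
        rcases (Walk.mem_support_iff _).1 hx with h' | h'
        · exact absurd h'.symm hax
        · simpa using h'
      obtain ⟨b, c, hbc, m, p3, hdec, hbm⟩ := ih hv' hx'
      exact ⟨b, c, hbc, Walk.cons h m, p3, by rw [Walk.cons_append, hdec],
        by simp [Walk.support_cons, hbm]⟩

/-- A segment between two given vertices of a walk, in one of the two orders. -/
lemma walk_seg_two {s t : V} (p : G.Walk s t) {a c : V} (ha : a ∈ p.support)
    (hc : c ∈ p.support) (hac : a ≠ c) :
    (∃ (p1 : G.Walk s a) (m : G.Walk a c) (p3 : G.Walk c t), p = p1.append (m.append p3)) ∨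
    (∃ (p1 : G.Walk s c) (m : G.Walk c a) (p3 : G.Walk a t), p = p1.append (m.append p3)) := by
  obtain ⟨b, e, hbe, m, p3, hdec, hbm⟩ := walk_two_point p ha hc hac
  rcases hbe with ⟨rfl, rfl⟩ | ⟨rfl, rfl⟩
  · left
    refine ⟨m.takeUntil b hbm, m.dropUntil b hbm, p3, ?_⟩
    rw [hdec]
    conv_lhs => rw [← Walk.take_spec m hbm]
    rw [Walk.append_assoc]
  · right
    refine ⟨m.takeUntil b hbm, m.dropUntil b hbm, p3, ?_⟩
    rw [hdec]
    conv_lhs => rw [← Walk.take_spec m hbm]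
    rw [Walk.append_assoc]

/-- Three vertices on a walk: one of them lies on a segment between the other two. -/
lemma walk_three_point {s t : V} (p : G.Walk s t) {u v x : V} (hu : u ∈ p.support)
    (hv : v ∈ p.support) (hx : x ∈ p.support)
    (huv : u ≠ v) (hux : u ≠ x) (hvx : v ≠ x) :
    ∃ a b c, ((a = u ∧ b = v ∧ c = x) ∨ (a = u ∧ b = x ∧ c = v) ∨
              (a = v ∧ b = u ∧ c = x) ∨ (a = v ∧ b = x ∧ c = u) ∨
              (a = x ∧ b = u ∧ c = v) ∨ (a = x ∧ b = v ∧ c = u)) ∧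
      ∃ (p1 : G.Walk s a) (m : G.Walk a c) (p3 : G.Walk c t),
        p = p1.append (m.append p3) ∧ b ∈ m.support := by
  induction p with
  | nil =>
    simp only [Walk.support_nil, List.mem_singleton] at hu hv
    exact absurd (hu.trans hv.symm) huv
  | @cons a a' t h p ih =>
    by_cases hau : a = u
    · subst hau
      obtain ⟨b, c, hbc, m, p3, hdec, hbm⟩ := walk_two_point (Walk.cons h p) hv hx hvx
      refine ⟨a, b, c, ?_, Walk.nil, m, p3, by rw [Walk.nil_append]; exact hdec, hbm⟩
      rcases hbc with ⟨rfl, rfl⟩ | ⟨rfl, rfl⟩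
      · exact Or.inl ⟨rfl, rfl, rfl⟩
      · exact Or.inr (Or.inl ⟨rfl, rfl, rfl⟩)
    by_cases hav : a = v
    · subst hav
      obtain ⟨b, c, hbc, m, p3, hdec, hbm⟩ := walk_two_point (Walk.cons h p) hu hx hux
      refine ⟨a, b, c, ?_, Walk.nil, m, p3, by rw [Walk.nil_append]; exact hdec, hbm⟩
      rcases hbc with ⟨rfl, rfl⟩ | ⟨rfl, rfl⟩
      · exact Or.inr (Or.inr (Or.inl ⟨rfl, rfl, rfl⟩))
      · exact Or.inr (Or.inr (Or.inr (Or.inl ⟨rfl, rfl, rfl⟩)))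
    by_cases hax : a = x
    · subst hax
      obtain ⟨b, c, hbc, m, p3, hdec, hbm⟩ := walk_two_point (Walk.cons h p) hu hv huv
      refine ⟨a, b, c, ?_, Walk.nil, m, p3, by rw [Walk.nil_append]; exact hdec, hbm⟩
      rcases hbc with ⟨rfl, rfl⟩ | ⟨rfl, rfl⟩
      · exact Or.inr (Or.inr (Or.inr (Or.inr (Or.inl ⟨rfl, rfl, rfl⟩))))
      · exact Or.inr (Or.inr (Or.inr (Or.inr (Or.inr ⟨rfl, rfl, rfl⟩))))
    · have hu' : u ∈ p.support := by
        rcases (Walk.mem_support_iff _).1 hu with h' | h'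
        · exact absurd h'.symm hau
        · simpa using h'
      have hv' : v ∈ p.support := by
        rcases (Walk.mem_support_iff _).1 hv with h' | h'
        · exact absurd h'.symm hav
        · simpa using h'
      have hx' : x ∈ p.support := by
        rcases (Walk.mem_support_iff _).1 hx with h' | h'
        · exact absurd h'.symm hax
        · simpa using h'
      obtain ⟨a', b, c, habc, p1, m, p3, hdec, hbm⟩ := ih hu' hv' hx'
      exact ⟨a', b, c, habc, Walk.cons h p1, m, p3, by rw [Walk.cons_append, hdec], hbm⟩

end Helpers

/-- A system of unique shortest paths has VC dimension at most 2: no three (distinct)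
vertices are shattered by the paths. -/
theorem stmt5 {U : Type*} {G : SimpleGraph U} (w : Sym2 U → ℝ)
    (Paths : Set (Σ a : U, Σ b : U, G.Walk a b))
    (hPaths : ∀ π ∈ Paths, (π.2.2 : G.Walk π.1 π.2.1).IsPath ∧
      ∀ q : G.Walk π.1 π.2.1, q ≠ π.2.2 → walkWeight w π.2.2 < walkWeight w q)
    (u v x : U) (huv : u ≠ v) (hux : u ≠ x) (hvx : v ≠ x) :
    ¬ (∀ s : Set U, s ⊆ {u, v, x} →
        ∃ π ∈ Paths, ∀ y ∈ ({u, v, x} : Set U), (y ∈ (π.2.2 : G.Walk π.1 π.2.1).support ↔ y ∈ s)) := by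
  classical
  intro hshat
  obtain ⟨π1, hπ1, hiff1⟩ := hshat {u, v, x} (subset_refl _)
  have hmu : u ∈ ({u, v, x} : Set U) := Set.mem_insert _ _
  have hmv : v ∈ ({u, v, x} : Set U) := Set.mem_insert_of_mem _ (Set.mem_insert _ _)
  have hmx : x ∈ ({u, v, x} : Set U) := Set.mem_insert_of_mem _ (Set.mem_insert_of_mem _ rfl)
  have hu1 : u ∈ π1.2.2.support := (hiff1 u hmu).2 hmu
  have hv1 : v ∈ π1.2.2.support := (hiff1 v hmv).2 hmv
  have hx1 : x ∈ π1.2.2.support := (hiff1 x hmx).2 hmx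
  have hmin1 : WalkStrictMin w π1.2.2 := (hPaths π1 hπ1).2
  obtain ⟨a, b, c, habc, p1, m1, p3, hdec1, hbm1⟩ :=
    walk_three_point π1.2.2 hu1 hv1 hx1 huv hux hvx
  have hm1 : WalkStrictMin w m1 := hmin1.segment p1 m1 p3 hdec1
  have ha_mem : a ∈ ({u, v, x} : Set U) := by rcases habc with ⟨rfl,_,_⟩|⟨rfl,_,_⟩|⟨rfl,_,_⟩|⟨rfl,_,_⟩|⟨rfl,_,_⟩|⟨rfl,_,_⟩ <;> simp
  have hb_mem : b ∈ ({u, v, x} : Set U) := by rcases habc with ⟨_,rfl,_⟩|⟨_,rfl,_⟩|⟨_,rfl,_⟩|⟨_,rfl,_⟩|⟨_,rfl,_⟩|⟨_,rfl,_⟩ <;> simp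
  have hc_mem : c ∈ ({u, v, x} : Set U) := by rcases habc with ⟨_,_,rfl⟩|⟨_,_,rfl⟩|⟨_,_,rfl⟩|⟨_,_,rfl⟩|⟨_,_,rfl⟩|⟨_,_,rfl⟩ <;> simp
  have hba : b ≠ a := by rcases habc with ⟨rfl,rfl,rfl⟩|⟨rfl,rfl,rfl⟩|⟨rfl,rfl,rfl⟩|⟨rfl,rfl,rfl⟩|⟨rfl,rfl,rfl⟩|⟨rfl,rfl,rfl⟩ <;> tauto
  have hbc : b ≠ c := by rcases habc with ⟨rfl,rfl,rfl⟩|⟨rfl,rfl,rfl⟩|⟨rfl,rfl,rfl⟩|⟨rfl,rfl,rfl⟩|⟨rfl,rfl,rfl⟩|⟨rfl,rfl,rfl⟩ <;> tauto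
  have hac : a ≠ c := by rcases habc with ⟨rfl,rfl,rfl⟩|⟨rfl,rfl,rfl⟩|⟨rfl,rfl,rfl⟩|⟨rfl,rfl,rfl⟩|⟨rfl,rfl,rfl⟩|⟨rfl,rfl,rfl⟩ <;> tauto
  obtain ⟨π2, hπ2, hiff2⟩ := hshat {a, c} (by
    intro y hy
    rcases hy with rfl | rfl
    · exact ha_mem
    · exact hc_mem)
  have ha2 : a ∈ π2.2.2.support := (hiff2 a ha_mem).2 (Set.mem_insert _ _)
  have hc2 : c ∈ π2.2.2.support := (hiff2 c hc_mem).2 (Set.mem_insert_of_mem _ rfl)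
  have hb2 : b ∉ π2.2.2.support := by
    intro hmem
    have := (hiff2 b hb_mem).1 hmem
    rcases this with h' | h'
    · exact hba h'
    · exact hbc h'
  have hmin2 : WalkStrictMin w π2.2.2 := (hPaths π2 hπ2).2
  rcases walk_seg_two π2.2.2 ha2 hc2 hac with ⟨q1, m2, q3, hdec2⟩ | ⟨q1, m2, q3, hdec2⟩
  · have hm2 : WalkStrictMin w m2 := hmin2.segment q1 m2 q3 hdec2
    have heq : m1 = m2 := hm1.unique hm2
    apply hb2
    rw [hdec2, Walk.mem_support_append_iff, Walk.mem_support_append_iff]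
    exact Or.inr (Or.inl (heq ▸ hbm1))
  · have hm2 : WalkStrictMin w m2.reverse := (hmin2.segment q1 m2 q3 hdec2).reverse
    have heq : m1 = m2.reverse := hm1.unique hm2
    apply hb2
    rw [hdec2, Walk.mem_support_append_iff, Walk.mem_support_append_iff]
    refine Or.inr (Or.inl ?_)
    have : b ∈ m2.reverse.support := heq ▸ hbm1
    rwa [Walk.support_reverse, List.mem_reverse] at this
end

section
/- Suppose for every matrix B formed by restricting columns of a {0,1}-matrix A to a subset of size m, there is a vector y ∈ [-1,1]^m with at least m/2 coordinates in {±1} and ‖B(y - y_start)‖_∞ ≤ c·m^{1/6} for any starting point y_start ∈ [-1,1]^m. Then iterating partial colorings starting from the zero vector yields a full coloring x ∈ {±1}^N with ‖Ax‖_∞ ≤ C·N^{1/6} for some constant C depending only on c, using the geometric decay of the number of fractional coordinates. -/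
/-- Iterating partial colorings: if every column-restriction of a 0/1 matrix `A` to a set
`I` admits a partial coloring fixing at least half of `I` to `±1` while changing each row
sum by at most `c·|I|^{1/6}`, then starting from the zero vector one obtains a full
coloring `x ∈ {±1}^N` with `‖Ax‖_∞ ≤ C·N^{1/6}`, for a constant `C` depending only on `c`. -/
theorem stmt10 (c : ℝ) (hc : 0 < c) :
    ∃ C : ℝ, 0 < C ∧ ∀ (D N : ℕ) (A : Matrix (Fin D) (Fin N) ℝ),
      (∀ j i, A j i = 0 ∨ A j i = 1) →
      (∀ (I : Finset (Fin N)) (y0 : Fin N → ℝ), (∀ i ∈ I, |y0 i| ≤ 1) →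
        ∃ y : Fin N → ℝ, (∀ i ∈ I, |y i| ≤ 1) ∧
          (∃ J ⊆ I, (I.card : ℝ) ≤ 2 * (J.card : ℝ) ∧ ∀ i ∈ J, y i = 1 ∨ y i = -1) ∧
          ∀ j, |∑ i ∈ I, A j i * (y i - y0 i)| ≤ c * (I.card : ℝ) ^ ((1 : ℝ) / 6)) →
      ∃ x : Fin N → ℝ, (∀ i, x i = 1 ∨ x i = -1) ∧
        ∀ j, |∑ i, A j i * x i| ≤ C * (N : ℝ) ^ ((1 : ℝ) / 6) := by
  set t : ℝ := (2 : ℝ) ^ (-((1 : ℝ) / 6)) with ht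
  have ht0 : 0 < t := Real.rpow_pos_of_pos (by norm_num) _
  have ht1 : t < 1 := Real.rpow_lt_one_of_one_lt_of_neg (by norm_num) (by norm_num)
  set K : ℝ := c / (1 - t) with hK
  have hKpos : 0 < K := div_pos hc (by linarith)
  have hKeq' : K * (1 - t) = c := div_mul_cancel₀ c (ne_of_gt (by linarith))
  have hKeq : K * t + c = K := by linear_combination -1 * hKeq'
  refine ⟨K, hKpos, ?_⟩
  intro D N A hA01 hyp
  have main : ∀ n : ℕ, ∀ I : Finset (Fin N), I.card ≤ n → ∀ y : Fin N → ℝ,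
      (∀ i ∈ I, |y i| ≤ 1) →
      ∃ x : Fin N → ℝ, (∀ i, i ∉ I → x i = y i) ∧ (∀ i ∈ I, x i = 1 ∨ x i = -1) ∧
        ∀ j, |∑ i ∈ I, A j i * (x i - y i)| ≤ K * (I.card : ℝ) ^ ((1 : ℝ) / 6) := by
    intro n
    induction n with
    | zero =>
      intro I hI y hy
      have hIe : I = ∅ := Finset.card_eq_zero.mp (Nat.le_zero.mp hI)
      subst hIe
      refine ⟨y, fun i _ => rfl, fun i hi => absurd hi (Finset.notMem_empty i), ?_⟩
      intro j
      rw [Finset.sum_empty, abs_zero]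
      exact mul_nonneg hKpos.le (Real.rpow_nonneg (by positivity) _)
    | succ n ih =>
      intro I hI y hy
      by_cases hIe : I = ∅
      · subst hIe
        refine ⟨y, fun i _ => rfl, fun i hi => absurd hi (Finset.notMem_empty i), ?_⟩
        intro j
        rw [Finset.sum_empty, abs_zero]
        exact mul_nonneg hKpos.le (Real.rpow_nonneg (by positivity) _)
      · obtain ⟨y', hy'le, ⟨J, hJI, hJcard, hJpm⟩, hrow⟩ := hyp I y hy
        set z : Fin N → ℝ := fun i => if i ∈ I then y' i else y i with hz
        set I' : Finset (Fin N) := I \ J with hI'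
        have hIcard1 : 1 ≤ I.card := Finset.card_pos.mpr (Finset.nonempty_iff_ne_empty.mpr hIe)
        have hJ1 : 1 ≤ J.card := by
          by_contra h
          have hJ0 : J.card = 0 := by omega
          rw [hJ0] at hJcard
          have : (1 : ℝ) ≤ (I.card : ℝ) := by exact_mod_cast hIcard1
          norm_num at hJcard
          exact hIe hJcard
        have hI'sub : I' ⊆ I := Finset.sdiff_subset
        have hI'card_eq : I'.card = I.card - J.card := Finset.card_sdiff_of_subset hJI
        have hI'n : I'.card ≤ n := by omega
        have hI'half : (I'.card : ℝ) ≤ (I.card : ℝ) / 2 := by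
          have hle : J.card ≤ I.card := Finset.card_le_card hJI
          have : (I'.card : ℝ) = (I.card : ℝ) - (J.card : ℝ) := by
            rw [hI'card_eq]
            push_cast [Nat.cast_sub hle]
            ring
          linarith
        have hzle : ∀ i ∈ I', |z i| ≤ 1 := by
          intro i hi
          have hiI : i ∈ I := hI'sub hi
          simp only [hz, if_pos hiI]
          exact hy'le i hiI
        obtain ⟨x, hxz, hxpm, hxbound⟩ := ih I' hI'n z hzle
        have hxJ : ∀ i ∈ I, i ∉ I' → x i = y' i := by
          intro i hiI hiI'
          rw [hxz i hiI', hz]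
          simp [hiI]
        refine ⟨x, ?_, ?_, ?_⟩
        · intro i hi
          have hiI' : i ∉ I' := fun h => hi (hI'sub h)
          rw [hxz i hiI', hz]
          simp [hi]
        · intro i hi
          by_cases hiI' : i ∈ I'
          · exact hxpm i hiI'
          · have hiJ : i ∈ J := by
              by_contra hj
              exact hiI' (Finset.mem_sdiff.mpr ⟨hi, hj⟩)
            rw [hxJ i hi hiI']
            exact hJpm i hiJ
        · intro j
          have hsplit : ∑ i ∈ I, A j i * (x i - y i)
              = (∑ i ∈ I, A j i * (x i - z i)) + ∑ i ∈ I, A j i * (z i - y i) := by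
            rw [← Finset.sum_add_distrib]
            exact Finset.sum_congr rfl (fun i _ => by ring)
          have h1 : ∑ i ∈ I, A j i * (x i - z i) = ∑ i ∈ I', A j i * (x i - z i) := by
            refine (Finset.sum_subset hI'sub ?_).symm
            intro i hiI hiI'
            rw [hxz i hiI']
            ring
          have h2 : ∑ i ∈ I, A j i * (z i - y i) = ∑ i ∈ I, A j i * (y' i - y i) := by
            refine Finset.sum_congr rfl (fun i hi => ?_)
            simp [hz, hi]
          have hb1 : |∑ i ∈ I', A j i * (x i - z i)| ≤ K * (I'.card : ℝ) ^ ((1 : ℝ) / 6) :=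
            hxbound j
          have hb2 : |∑ i ∈ I, A j i * (y' i - y i)| ≤ c * (I.card : ℝ) ^ ((1 : ℝ) / 6) :=
            hrow j
          set M : ℝ := (I.card : ℝ) ^ ((1 : ℝ) / 6) with hM
          have hMnn : 0 ≤ M := Real.rpow_nonneg (by positivity) _
          have hrpow : (I'.card : ℝ) ^ ((1 : ℝ) / 6) ≤ M * t := by
            have h1' : (I'.card : ℝ) ^ ((1 : ℝ) / 6) ≤ ((I.card : ℝ) / 2) ^ ((1 : ℝ) / 6) :=
              Real.rpow_le_rpow (by positivity) hI'half (by norm_num)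
            have h2' : ((I.card : ℝ) / 2) ^ ((1 : ℝ) / 6)
                = M * ((2 : ℝ) ^ ((1 : ℝ) / 6))⁻¹ := by
              rw [Real.div_rpow (by positivity) (by norm_num), hM, div_eq_mul_inv]
            have h3' : t = ((2 : ℝ) ^ ((1 : ℝ) / 6))⁻¹ := by
              rw [ht, Real.rpow_neg (by norm_num)]
            rw [h2', ← h3'] at h1'
            exact h1'
          calc |∑ i ∈ I, A j i * (x i - y i)|
              ≤ |∑ i ∈ I, A j i * (x i - z i)| + |∑ i ∈ I, A j i * (z i - y i)| := by
                rw [hsplit]; exact abs_add_le _ _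
            _ ≤ K * (I'.card : ℝ) ^ ((1 : ℝ) / 6) + c * M := by
                rw [h1, h2]; exact add_le_add hb1 hb2
            _ ≤ K * (M * t) + c * M := by
                have := mul_le_mul_of_nonneg_left hrpow hKpos.le
                linarith
            _ = (K * t + c) * M := by ring
            _ = K * M := by rw [hKeq]
  obtain ⟨x, _, hxpm, hxbound⟩ := main N Finset.univ (by simp) 0 (by simp)
  refine ⟨x, fun i => hxpm i (Finset.mem_univ i), ?_⟩
  intro j
  have := hxbound j
  simpa using this
end

section
/- In the Thorup–Zwick style hierarchy, suppose distances satisfy: dist(w_i, v_{i-1}) ≤ dist(w_{i-1}, v_{i-1}) + 2α for each level i (where u_i = v_{i-1}, v_i = u_{i-1}, w_0 = u_0 = u, v_0 = v), and dist is a metric. Then by induction, dist(w_ℓ, u_ℓ) ≤ dist(w_0, u_0) + ℓ·dist(u,v) + 2ℓα = ℓ·dist(u,v) + 2ℓα, and consequently dist(u, w_ℓ) + dist(v, w_ℓ) ≤ (2ℓ+1)·dist(u,v) + 2(2ℓ+1)α. -/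
/-- The Thorup–Zwick style induction: from `dist(w_{i+1}, v_i) ≤ dist(w_i, v_i) + 2α`
(with `u_{i+1} = v_i`, `v_{i+1} = u_i`, `u_0 = w_0 = u`, `v_0 = v`) one gets
`dist(w_ℓ, u_ℓ) ≤ ℓ·dist(u,v) + 2ℓα` and
`dist(u, w_ℓ) + dist(v, w_ℓ) ≤ (2ℓ+1)·dist(u,v) + 2(2ℓ+1)α`. -/
theorem stmt17 {V : Type*} (d : V → V → ℝ)
    (hsymm : ∀ x y, d x y = d y x)
    (htri : ∀ x y z, d x z ≤ d x y + d y z)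
    (hself : ∀ x, d x x = 0)
    (hnonneg : ∀ x y, 0 ≤ d x y)
    (uu vv : V) (α : ℝ) (hα : 0 ≤ α)
    (u v w : ℕ → V)
    (hu0 : u 0 = uu) (hw0 : w 0 = uu) (hv0 : v 0 = vv)
    (hui : ∀ i, u (i + 1) = v i) (hvi : ∀ i, v (i + 1) = u i)
    (hwi : ∀ i, d (w (i + 1)) (v i) ≤ d (w i) (v i) + 2 * α)
    (ℓ : ℕ) :
    d (w ℓ) (u ℓ) ≤ (ℓ : ℝ) * d uu vv + 2 * (ℓ : ℝ) * α ∧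
      d uu (w ℓ) + d vv (w ℓ) ≤ (2 * (ℓ : ℝ) + 1) * d uu vv + 2 * (2 * (ℓ : ℝ) + 1) * α := by
  have hpair : ∀ i, (u i = uu ∧ v i = vv) ∨ (u i = vv ∧ v i = uu) := by
    intro i
    induction i with
    | zero => exact Or.inl ⟨hu0, hv0⟩
    | succ n ih =>
      rcases ih with ⟨h1, h2⟩ | ⟨h1, h2⟩
      · exact Or.inr ⟨by rw [hui, h2], by rw [hvi, h1]⟩
      · exact Or.inl ⟨by rw [hui, h2], by rw [hvi, h1]⟩
  have hduv : ∀ i, d (u i) (v i) = d uu vv := by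
    intro i
    rcases hpair i with ⟨h1, h2⟩ | ⟨h1, h2⟩
    · rw [h1, h2]
    · rw [h1, h2, hsymm]
  have hmain : ∀ i, d (w i) (u i) ≤ (i : ℝ) * d uu vv + 2 * (i : ℝ) * α := by
    intro i
    induction i with
    | zero => simp [hw0, hu0, hself]
    | succ n ih =>
      have h1 : d (w (n + 1)) (u (n + 1)) = d (w (n + 1)) (v n) := by rw [hui]
      have h2 : d (w n) (v n) ≤ d (w n) (u n) + d uu vv := by
        calc d (w n) (v n) ≤ d (w n) (u n) + d (u n) (v n) := htri _ _ _
          _ = d (w n) (u n) + d uu vv := by rw [hduv]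
      have := hwi n
      rw [h1]
      push_cast
      nlinarith
  refine ⟨hmain ℓ, ?_⟩
  have hm := hmain ℓ
  have h1 : d uu (w ℓ) ≤ d uu (u ℓ) + d (w ℓ) (u ℓ) := by
    calc d uu (w ℓ) ≤ d uu (u ℓ) + d (u ℓ) (w ℓ) := htri _ _ _
      _ = d uu (u ℓ) + d (w ℓ) (u ℓ) := by rw [hsymm (u ℓ)]
  have h2 : d vv (w ℓ) ≤ d vv (u ℓ) + d (w ℓ) (u ℓ) := by
    calc d vv (w ℓ) ≤ d vv (u ℓ) + d (u ℓ) (w ℓ) := htri _ _ _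
      _ = d vv (u ℓ) + d (w ℓ) (u ℓ) := by rw [hsymm (u ℓ)]
  have h3 : d uu (u ℓ) + d vv (u ℓ) = d uu vv := by
    rcases hpair ℓ with ⟨hl, _⟩ | ⟨hl, _⟩
    · rw [hl, hself]; ring_nf; rw [hsymm]
    · rw [hl, hself]; ring
  nlinarith [hnonneg uu vv]
end
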